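/- arXiv:1008.2924 — 4 statements merged into one kernel-verified Lean document; each statement's English description precedes it below -/
import Mathlib

section
/- In S = K[x_1,x_2,x_3,x_4], for I = (x_1,x_2) ∩ (x_3,x_4), the direct sum x_1x_3 K[x_1,x_3,x_4] ⊕ x_1x_4 K[x_1,x_2,x_4] ⊕ x_2x_3 K[x_1,x_2,x_3] ⊕ x_2x_4 K[x_2,x_3,x_4] ⊕ x_1x_2x_3x_4 S is a Stanley decomposition of I (i.e., the sum is direct as K-vector spaces and equals I), hence sdepth_S(I) ≥ 3. -/
open MvPolynomial

/-- The depth of a module `M` with respect to an ideal `I`: the supremum of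
lengths of `M`-regular sequences with entries in `I`. -/
noncomputable def moduleDepth (R : Type*) [CommRing R] (I : Ideal R)
    (M : Type*) [AddCommGroup M] [Module R M] : ℕ :=
  sSup {k | ∃ rs : List R, rs.length = k ∧ (∀ r ∈ rs, r ∈ I) ∧
    RingTheory.Sequence.IsRegular M rs}

/-- The Stanley space `u·K[Z]`: the `K`-span of all monomials `u·v` with
`v` a monomial in the variables of `Z`. -/
noncomputable def stanleySpace {n : ℕ} (K : Type*) [Field K] (d : Fin n →₀ ℕ)
    (Z : Finset (Fin n)) : Submodule K (MvPolynomial (Fin n) K) :=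
  Submodule.span K {f | ∃ e : Fin n →₀ ℕ, (∀ i, e i ≠ 0 → i ∈ Z) ∧
    f = monomial (d + e) (1 : K)}

/-- A Stanley decomposition of a monomial ideal `I`: a finite family of Stanley
spaces `uᵢ·K[Zᵢ]`, with each `uᵢ ∈ I`, which are independent and whose (direct)
sum is `I` as a `K`-vector space. -/
structure StanleyDecomp {n : ℕ} (K : Type*) [Field K]
    (I : Ideal (MvPolynomial (Fin n) K)) where
  m : ℕ
  u : Fin m → (Fin n →₀ ℕ)
  Z : Fin m → Finset (Fin n)
  mem : ∀ i, monomial (u i) (1 : K) ∈ I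
  indep : iSupIndep fun i => stanleySpace K (u i) (Z i)
  total : (⨆ i, stanleySpace K (u i) (Z i)) = Submodule.restrictScalars K I

/-- The Stanley depth of a monomial ideal: the largest `k` such that `I` admits a
Stanley decomposition all of whose Stanley spaces use at least `k` variables. -/
noncomputable def sdepth {n : ℕ} {K : Type*} [Field K]
    (I : Ideal (MvPolynomial (Fin n) K)) : ℕ :=
  sSup {k | ∃ D : StanleyDecomp K I, ∀ i, k ≤ (D.Z i).card}

/-- `I` is a monomial ideal if it is generated by monomials. -/
def IsMonomialIdeal {n : ℕ} {K : Type*} [Field K]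
    (I : Ideal (MvPolynomial (Fin n) K)) : Prop :=
  ∃ G : Set (Fin n →₀ ℕ), I = Ideal.span ((fun d => monomial d (1 : K)) '' G)

/-- The monomial prime ideal generated by the variables in `A`. -/
noncomputable def varIdeal {n : ℕ} (K : Type*) [Field K] (A : Finset (Fin n)) :
    Ideal (MvPolynomial (Fin n) K) :=
  Ideal.span ((fun i => (X i : MvPolynomial (Fin n) K)) '' ↑A)

/-- The graded maximal ideal `(x_1, …, x_n)`. -/
noncomputable def maxIdeal (n : ℕ) (K : Type*) [Field K] :
    Ideal (MvPolynomial (Fin n) K) :=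
  varIdeal K Finset.univ


section StanleyAux

variable {K : Type*} [Field K]

/-- The submodule of polynomials all of whose monomials lie in `T`. -/
def suppIn {n : ℕ} (K : Type*) [Field K] (T : Set (Fin n →₀ ℕ)) :
    Submodule K (MvPolynomial (Fin n) K) where
  carrier := {p | ∀ a ∈ p.support, a ∈ T}
  zero_mem' := by simp
  add_mem' := by
    classical
    intro p q hp hq a ha
    rcases Finset.mem_union.1 (MvPolynomial.support_add ha) with h | h
    exacts [hp a h, hq a h]
  smul_mem' := fun c p hp a ha => hp a (MvPolynomial.support_smul ha)

lemma mem_suppIn {n : ℕ} {T : Set (Fin n →₀ ℕ)} {p : MvPolynomial (Fin n) K} :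
    p ∈ suppIn K T ↔ ∀ a ∈ p.support, a ∈ T := Iff.rfl

lemma span_monomials_eq_suppIn {n : ℕ} (T : Set (Fin n →₀ ℕ)) :
    Submodule.span K {g | ∃ a ∈ T, g = monomial a (1 : K)} = suppIn K T := by
  classical
  apply le_antisymm
  · rw [Submodule.span_le]
    rintro g ⟨a, ha, rfl⟩ b hb
    rw [MvPolynomial.support_monomial, if_neg one_ne_zero] at hb
    simp only [Finset.mem_singleton] at hb
    subst hb; exact ha
  · intro p hp
    rw [p.as_sum]
    refine Submodule.sum_mem _ fun a ha => ?_
    have h1 : monomial a (coeff a p) = (coeff a p) • monomial a (1 : K) := by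
      rw [MvPolynomial.smul_monomial, smul_eq_mul, mul_one]
    rw [h1]
    exact Submodule.smul_mem _ _ (Submodule.subset_span ⟨a, hp a ha, rfl⟩)

lemma stanleySpace_eq_suppIn {n : ℕ} (d : Fin n →₀ ℕ) (Z : Finset (Fin n)) :
    stanleySpace K d Z = suppIn K {a | d ≤ a ∧ ∀ i ∉ Z, a i = d i} := by
  rw [stanleySpace, ← span_monomials_eq_suppIn]
  congr 1
  ext g
  constructor
  · rintro ⟨e, he, rfl⟩
    refine ⟨d + e, ⟨le_add_right le_rfl, fun i hi => ?_⟩, rfl⟩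
    have : e i = 0 := by by_contra h; exact hi (he i h)
    simp [this]
  · rintro ⟨a, ⟨hle, hout⟩, rfl⟩
    refine ⟨a - d, fun i hi => ?_, by rw [add_tsub_cancel_of_le hle]⟩
    by_contra hiZ
    exact hi (by simp [Finsupp.tsub_apply, hout i hiZ])

lemma suppIn_mono {n : ℕ} {T T' : Set (Fin n →₀ ℕ)} (h : T ⊆ T') :
    suppIn K T ≤ suppIn K T' := fun _ hp a ha => h (hp a ha)

lemma suppIn_disjoint {n : ℕ} {T T' : Set (Fin n →₀ ℕ)}
    (h : ∀ a, a ∈ T → a ∈ T' → False) : Disjoint (suppIn K T) (suppIn K T') := by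
  rw [Submodule.disjoint_def]
  intro p hp hp'
  rw [← MvPolynomial.support_eq_empty, Finset.eq_empty_iff_forall_notMem]
  intro a ha
  exact h a (hp a ha) (hp' a ha)

lemma suppIn_iUnion {n m : ℕ} (T : Fin m → Set (Fin n →₀ ℕ)) :
    suppIn K (⋃ i, T i) = ⨆ i, suppIn K (T i) := by
  rw [← span_monomials_eq_suppIn]
  have h : {g | ∃ a ∈ ⋃ i, T i, g = monomial a (1 : K)} =
      ⋃ i, {g | ∃ a ∈ T i, g = monomial a (1 : K)} := by
    ext g; simp only [Set.mem_iUnion, Set.mem_setOf_eq]; tauto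
  rw [h, Submodule.span_iUnion]
  simp_rw [span_monomials_eq_suppIn]

lemma mem_varIdeal_pair {n : ℕ} (i j : Fin n) (p : MvPolynomial (Fin n) K) :
    p ∈ varIdeal K {i, j} ↔ ∀ a ∈ p.support, a i ≠ 0 ∨ a j ≠ 0 := by
  classical
  have hspan : varIdeal K ({i, j} : Finset (Fin n)) = Ideal.span {X i, X j} := by
    rw [varIdeal]
    congr 1
    simp [Set.image_insert_eq]
  rw [hspan]
  constructor
  · intro hp a ha
    rw [Ideal.mem_span_pair] at hp
    obtain ⟨u, v, huv⟩ := hp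
    rw [← huv] at ha
    rcases Finset.mem_union.1 (MvPolynomial.support_add ha) with h | h
    · left
      intro hai
      have hc := MvPolynomial.mem_support_iff.1 h
      rw [MvPolynomial.coeff_mul_X', if_neg (by simp [Finsupp.mem_support_iff, hai])] at hc
      exact hc rfl
    · right
      intro haj
      have hc := MvPolynomial.mem_support_iff.1 h
      rw [MvPolynomial.coeff_mul_X', if_neg (by simp [Finsupp.mem_support_iff, haj])] at hc
      exact hc rfl
  · intro h
    rw [p.as_sum]
    refine Submodule.sum_mem _ fun a ha => ?_
    rcases h a ha with hk | hk
    · have heq : (monomial a (coeff a p) : MvPolynomial (Fin n) K) =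
          monomial (a - Finsupp.single i 1) (coeff a p) * X i := by
        rw [MvPolynomial.X, MvPolynomial.monomial_mul, mul_one,
          tsub_add_cancel_of_le (Finsupp.single_le_iff.2 (Nat.one_le_iff_ne_zero.2 hk))]
      rw [heq]
      exact Ideal.mul_mem_left _ _ (Ideal.subset_span (Set.mem_insert _ _))
    · have heq : (monomial a (coeff a p) : MvPolynomial (Fin n) K) =
          monomial (a - Finsupp.single j 1) (coeff a p) * X j := by
        rw [MvPolynomial.X, MvPolynomial.monomial_mul, mul_one,
          tsub_add_cancel_of_le (Finsupp.single_le_iff.2 (Nat.one_le_iff_ne_zero.2 hk))]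
      rw [heq]
      exact Ideal.mul_mem_left _ _ (Ideal.subset_span (Set.mem_insert_of_mem _ rfl))

lemma forall_fin4 (P : Fin 4 → Prop) : (∀ i, P i) ↔ P 0 ∧ P 1 ∧ P 2 ∧ P 3 := by
  constructor
  · intro h; exact ⟨h 0, h 1, h 2, h 3⟩
  · rintro ⟨h0, h1, h2, h3⟩ i; fin_cases i <;> assumption

lemma exists_fin5 (P : Fin 5 → Prop) : (∃ i, P i) ↔ P 0 ∨ P 1 ∨ P 2 ∨ P 3 ∨ P 4 := by
  constructor
  · rintro ⟨i, hi⟩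
    fin_cases i
    exacts [Or.inl hi, Or.inr (Or.inl hi), Or.inr (Or.inr (Or.inl hi)),
      Or.inr (Or.inr (Or.inr (Or.inl hi))), Or.inr (Or.inr (Or.inr (Or.inr hi)))]
  · rintro (h | h | h | h | h)
    exacts [⟨0, h⟩, ⟨1, h⟩, ⟨2, h⟩, ⟨3, h⟩, ⟨4, h⟩]

/-- The five exponent sets of the decomposition. -/
def Cset : Fin 5 → Set (Fin 4 →₀ ℕ) := fun k =>
  match k with
  | ⟨0, _⟩ => {a | 1 ≤ a 0 ∧ 1 ≤ a 2 ∧ a 1 = 0}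
  | ⟨1, _⟩ => {a | 1 ≤ a 0 ∧ 1 ≤ a 3 ∧ a 2 = 0}
  | ⟨2, _⟩ => {a | 1 ≤ a 1 ∧ 1 ≤ a 2 ∧ a 3 = 0}
  | ⟨3, _⟩ => {a | 1 ≤ a 1 ∧ 1 ≤ a 3 ∧ a 0 = 0}
  | ⟨4, _⟩ => {a | 1 ≤ a 0 ∧ 1 ≤ a 1 ∧ 1 ≤ a 2 ∧ 1 ≤ a 3}

lemma Cset_apply (k : Fin 5) (a : Fin 4 →₀ ℕ) : a ∈ Cset k ↔
    (match k with
    | ⟨0, _⟩ => 1 ≤ a 0 ∧ 1 ≤ a 2 ∧ a 1 = 0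
    | ⟨1, _⟩ => 1 ≤ a 0 ∧ 1 ≤ a 3 ∧ a 2 = 0
    | ⟨2, _⟩ => 1 ≤ a 1 ∧ 1 ≤ a 2 ∧ a 3 = 0
    | ⟨3, _⟩ => 1 ≤ a 1 ∧ 1 ≤ a 3 ∧ a 0 = 0
    | ⟨4, _⟩ => 1 ≤ a 0 ∧ 1 ≤ a 1 ∧ 1 ≤ a 2 ∧ 1 ≤ a 3) := by
  rcases k with ⟨k, hk⟩
  interval_cases k <;> rfl

lemma Cset_pairwise_disjoint :
    ∀ (k j : Fin 5), k ≠ j → ∀ a, a ∈ Cset k → a ∈ Cset j → False := by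
  intro k j hkj a hak haj
  rw [Cset_apply] at hak haj
  fin_cases k <;> fin_cases j <;> simp_all <;> omega

/-- Stanley space evaluations. -/
lemma stanley0 : stanleySpace K (Finsupp.single (0 : Fin 4) 1 + Finsupp.single (2 : Fin 4) 1)
    {0, 2, 3} = suppIn K (Cset 0) := by
  rw [stanleySpace_eq_suppIn]
  congr 1
  ext a
  rw [Cset_apply]
  simp [Finsupp.le_def, forall_fin4, Finsupp.single_apply]
  all_goals omega

lemma stanley1 : stanleySpace K (Finsupp.single (0 : Fin 4) 1 + Finsupp.single (3 : Fin 4) 1)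
    {0, 1, 3} = suppIn K (Cset 1) := by
  rw [stanleySpace_eq_suppIn]
  congr 1
  ext a
  rw [Cset_apply]
  simp [Finsupp.le_def, forall_fin4, Finsupp.single_apply]
  all_goals omega

lemma stanley2 : stanleySpace K (Finsupp.single (1 : Fin 4) 1 + Finsupp.single (2 : Fin 4) 1)
    {0, 1, 2} = suppIn K (Cset 2) := by
  rw [stanleySpace_eq_suppIn]
  congr 1
  ext a
  rw [Cset_apply]
  simp [Finsupp.le_def, forall_fin4, Finsupp.single_apply]
  all_goals omega

lemma stanley3 : stanleySpace K (Finsupp.single (1 : Fin 4) 1 + Finsupp.single (3 : Fin 4) 1)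
    {1, 2, 3} = suppIn K (Cset 3) := by
  rw [stanleySpace_eq_suppIn]
  congr 1
  ext a
  rw [Cset_apply]
  simp [Finsupp.le_def, forall_fin4, Finsupp.single_apply]
  all_goals omega

lemma stanley4 : stanleySpace K (Finsupp.single (0 : Fin 4) 1 + Finsupp.single (1 : Fin 4) 1
    + Finsupp.single (2 : Fin 4) 1 + Finsupp.single (3 : Fin 4) 1)
    Finset.univ = suppIn K (Cset 4) := by
  rw [stanleySpace_eq_suppIn]
  congr 1
  ext a
  rw [Cset_apply]
  simp [Finsupp.le_def, forall_fin4, Finsupp.single_apply]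
  all_goals omega

/-- Characterization of the intersection ideal by supports. -/
lemma restrictScalars_inter_eq :
    Submodule.restrictScalars K (varIdeal K ({0, 1} : Finset (Fin 4)) ⊓
      varIdeal K ({2, 3} : Finset (Fin 4))) =
    suppIn K {a : Fin 4 →₀ ℕ | (a 0 ≠ 0 ∨ a 1 ≠ 0) ∧ (a 2 ≠ 0 ∨ a 3 ≠ 0)} := by
  ext p
  rw [Submodule.restrictScalars_mem, Submodule.mem_inf, mem_varIdeal_pair,
    mem_varIdeal_pair, mem_suppIn]
  constructor
  · rintro ⟨h1, h2⟩ a ha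
    exact ⟨h1 a ha, h2 a ha⟩
  · intro h
    exact ⟨fun a ha => (h a ha).1, fun a ha => (h a ha).2⟩

lemma iUnion_Cset :
    (⋃ i, Cset i) = {a : Fin 4 →₀ ℕ | (a 0 ≠ 0 ∨ a 1 ≠ 0) ∧ (a 2 ≠ 0 ∨ a 3 ≠ 0)} := by
  ext a
  rw [Set.mem_iUnion, exists_fin5]
  simp only [Cset_apply, Set.mem_setOf_eq]
  omega

lemma indep_of_suppIn (g : Fin 5 → Submodule K (MvPolynomial (Fin 4) K))
    (hg : ∀ k, g k = suppIn K (Cset k)) : iSupIndep g := by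
  intro k
  rw [hg k]
  have hb : (⨆ j, ⨆ (_ : j ≠ k), g j) ≤ suppIn K ((Cset k)ᶜ) := by
    refine iSup_le fun j => iSup_le fun hjk => ?_
    rw [hg j]
    exact suppIn_mono fun a haj hak => Cset_pairwise_disjoint j k hjk a haj hak
  exact Disjoint.mono_right hb (suppIn_disjoint fun a h h' => h' h)

lemma total_of_suppIn (g : Fin 5 → Submodule K (MvPolynomial (Fin 4) K))
    (hg : ∀ k, g k = suppIn K (Cset k)) :
    (⨆ i, g i) = Submodule.restrictScalars K (varIdeal K ({0, 1} : Finset (Fin 4)) ⊓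
      varIdeal K ({2, 3} : Finset (Fin 4))) := by
  have h1 : (⨆ i, g i) = ⨆ i, suppIn K (Cset i) := by
    exact iSup_congr hg
  rw [h1, ← suppIn_iUnion, iUnion_Cset, restrictScalars_inter_eq]

/-- The decomposition data. -/
noncomputable def uData : Fin 5 → (Fin 4 →₀ ℕ) := fun k =>
  match k with
  | ⟨0, _⟩ => Finsupp.single (0 : Fin 4) 1 + Finsupp.single (2 : Fin 4) 1
  | ⟨1, _⟩ => Finsupp.single (0 : Fin 4) 1 + Finsupp.single (3 : Fin 4) 1
  | ⟨2, _⟩ => Finsupp.single (1 : Fin 4) 1 + Finsupp.single (2 : Fin 4) 1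
  | ⟨3, _⟩ => Finsupp.single (1 : Fin 4) 1 + Finsupp.single (3 : Fin 4) 1
  | ⟨4, _⟩ => Finsupp.single (0 : Fin 4) 1 + Finsupp.single (1 : Fin 4) 1
      + Finsupp.single (2 : Fin 4) 1 + Finsupp.single (3 : Fin 4) 1

def ZData : Fin 5 → Finset (Fin 4) := fun k =>
  match k with
  | ⟨0, _⟩ => {0, 2, 3}
  | ⟨1, _⟩ => {0, 1, 3}
  | ⟨2, _⟩ => {0, 1, 2}
  | ⟨3, _⟩ => {1, 2, 3}
  | ⟨4, _⟩ => Finset.univ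

lemma stanley_uZ (k : Fin 5) :
    stanleySpace K (uData k) (ZData k) = suppIn K (Cset k) := by
  fin_cases k
  exacts [stanley0, stanley1, stanley2, stanley3, stanley4]

lemma monomial_mem_inter (k : Fin 5) :
    monomial (uData k) (1 : K) ∈ varIdeal K ({0, 1} : Finset (Fin 4)) ⊓
      varIdeal K ({2, 3} : Finset (Fin 4)) := by
  have h : monomial (uData k) (1 : K) ∈
      Submodule.restrictScalars K (varIdeal K ({0, 1} : Finset (Fin 4)) ⊓
        varIdeal K ({2, 3} : Finset (Fin 4))) := by
    classical
    rw [restrictScalars_inter_eq, mem_suppIn]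
    intro a ha
    rw [MvPolynomial.support_monomial, if_neg one_ne_zero, Finset.mem_singleton] at ha
    subst ha
    fin_cases k <;>
      simp [uData, Finsupp.single_apply]
  exact h

/-- The Stanley decomposition. -/
noncomputable def theDecomp : StanleyDecomp K
    (varIdeal K ({0, 1} : Finset (Fin 4)) ⊓ varIdeal K ({2, 3} : Finset (Fin 4))) where
  m := 5
  u := uData
  Z := ZData
  mem := monomial_mem_inter
  indep := indep_of_suppIn _ fun k => stanley_uZ k
  total := total_of_suppIn _ fun k => stanley_uZ k

lemma sdepth_ge_three :
    sdepth (varIdeal K ({0, 1} : Finset (Fin 4)) ⊓ varIdeal K ({2, 3} : Finset (Fin 4))) ≥ 3 := by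
  set I := varIdeal K ({0, 1} : Finset (Fin 4)) ⊓ varIdeal K ({2, 3} : Finset (Fin 4)) with hI
  have hmem : 3 ∈ {k | ∃ D : StanleyDecomp K I, ∀ i, k ≤ (D.Z i).card} := by
    have hZ : ∀ i : Fin 5, 3 ≤ (ZData i).card := by decide
    exact ⟨theDecomp, fun i => hZ i⟩
  have hbdd : BddAbove {k | ∃ D : StanleyDecomp K I, ∀ i, k ≤ (D.Z i).card} := by
    refine ⟨4, fun k hk => ?_⟩
    obtain ⟨D, hD⟩ := hk
    have hm : D.m ≠ 0 := by
      intro h0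
      haveI : IsEmpty (Fin D.m) := by rw [h0]; infer_instance
      have ht := D.total
      rw [iSup_of_empty] at ht
      have hmono : monomial (uData 0) (1 : K) ∈ Submodule.restrictScalars K I :=
        monomial_mem_inter 0
      rw [← ht] at hmono
      rw [Submodule.mem_bot] at hmono
      exact one_ne_zero ((MvPolynomial.monomial_eq_zero).1 hmono)
    have hcard : (D.Z ⟨0, Nat.pos_of_ne_zero hm⟩).card ≤ 4 := by
      calc (D.Z ⟨0, Nat.pos_of_ne_zero hm⟩).card ≤ (Finset.univ : Finset (Fin 4)).card :=
            Finset.card_le_card (Finset.subset_univ _)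
        _ = 4 := by simp
    exact le_trans (hD ⟨0, Nat.pos_of_ne_zero hm⟩) hcard
  exact le_csSup hbdd hmem

end StanleyAux

/-- an explicit Stanley decomposition of `(x₁,x₂) ∩ (x₃,x₄)` in
`K[x₁,x₂,x₃,x₄]` into five Stanley spaces, whence `sdepth ≥ 3`. -/
theorem stanley_decomp_example_four_vars {K : Type*} [Field K] :
    letI s : Fin 4 → (Fin 4 →₀ ℕ) := fun i => Finsupp.single i 1
    letI I : Ideal (MvPolynomial (Fin 4) K) :=
      varIdeal K {0, 1} ⊓ varIdeal K {2, 3}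
    letI f : Fin 5 → Submodule K (MvPolynomial (Fin 4) K) :=
      ![stanleySpace K (s 0 + s 2) {0, 2, 3},
        stanleySpace K (s 0 + s 3) {0, 1, 3},
        stanleySpace K (s 1 + s 2) {0, 1, 2},
        stanleySpace K (s 1 + s 3) {1, 2, 3},
        stanleySpace K (s 0 + s 1 + s 2 + s 3) Finset.univ]
    iSupIndep f ∧ (⨆ i, f i) = Submodule.restrictScalars K I ∧ sdepth I ≥ 3 := by
  refine ⟨indep_of_suppIn _ ?_, total_of_suppIn _ ?_, sdepth_ge_three⟩ <;>
  · intro k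
    fin_cases k
    exacts [stanley0, stanley1, stanley2, stanley3, stanley4]
end

section
/- Let P_1, P_2, P_3 be monomial prime ideals of S = K[x_1,...,x_n], none contained in another, with P_1 + P_2 + P_3 = (x_1,...,x_n), P_1 = (x_1,...,x_r), and I = P_1 ∩ P_2 ∩ P_3. Then I decomposes as a direct sum of K-linear subspaces I = I_1 ⊕ I_2 ⊕ I_3 ⊕ I_4, where I_1 = (I ∩ K[x_1,...,x_r])S, I_2 = (P_2 ∩ S')S'[x_{r+1},...,x_n] ∩ (P_3 ∩ S'[x_{r+1},...,x_n]), I_3 = (P_3 ∩ S'')S''[x_{r+1},...,x_n] ∩ (P_2 ∩ S''[x_{r+1},...,x_n]), and I_4 = I ∩ S̃. -/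
open MvPolynomial

section Good
variable {n : ℕ} (K : Type*) [Field K]

def goodSet (P : (Fin n →₀ ℕ) → Prop) : Submodule K (MvPolynomial (Fin n) K) where
  carrier := {f | ∀ e ∈ f.support, P e}
  add_mem' := by
    classical
    intro f g hf hg e he
    rcases Finset.mem_union.mp (MvPolynomial.support_add he) with h | h
    exacts [hf _ h, hg _ h]
  zero_mem' := by simp
  smul_mem' c f hf := fun e he => hf e (MvPolynomial.support_smul he)

variable {K}

lemma mem_goodSet {P : (Fin n →₀ ℕ) → Prop} {f : MvPolynomial (Fin n) K} :
    f ∈ goodSet K P ↔ ∀ e ∈ f.support, P e := Iff.rfl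

lemma monomial_mem_goodSet {P : (Fin n →₀ ℕ) → Prop} {e : Fin n →₀ ℕ} (c : K) (h : P e) :
    monomial e c ∈ goodSet K P := by
  classical
  intro d hd
  rw [MvPolynomial.support_monomial] at hd
  split at hd
  · simp at hd
  · simp only [Finset.mem_singleton] at hd; subst hd; exact h

lemma goodSet_mono {P Q : (Fin n →₀ ℕ) → Prop} (h : ∀ e, P e → Q e) :
    goodSet K P ≤ goodSet (n := n) K Q := fun f hf e he => h e (hf e he)

lemma goodSet_inf (P Q : (Fin n →₀ ℕ) → Prop) :
    goodSet K P ⊓ goodSet K Q = goodSet (n := n) K (fun e => P e ∧ Q e) := by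
  ext f; exact ⟨fun ⟨h1, h2⟩ e he => ⟨h1 e he, h2 e he⟩,
    fun h => ⟨fun e he => (h e he).1, fun e he => (h e he).2⟩⟩

lemma goodSet_disjoint {P Q : (Fin n →₀ ℕ) → Prop} (h : ∀ e, P e → Q e → False) :
    Disjoint (goodSet (n := n) K P) (goodSet K Q) := by
  rw [Submodule.disjoint_def]
  intro f h1 h2
  rw [← MvPolynomial.support_eq_empty, Finset.eq_empty_iff_forall_notMem]
  exact fun e he => h e (h1 e he) (h2 e he)

lemma goodSet_le_sup (P Q : (Fin n →₀ ℕ) → Prop) :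
    goodSet (n := n) K (fun e => P e ∨ Q e) ≤ goodSet K P ⊔ goodSet K Q := by
  classical
  intro f hf
  rw [MvPolynomial.as_sum f, ← Finset.sum_filter_add_sum_filter_not f.support P]
  refine Submodule.add_mem_sup (Submodule.sum_mem _ ?_) (Submodule.sum_mem _ ?_)
  · exact fun e he => monomial_mem_goodSet _ (Finset.mem_filter.mp he).2
  · intro e he
    rcases Finset.mem_filter.mp he with ⟨hs, hnp⟩
    exact monomial_mem_goodSet _ ((hf e hs).resolve_left hnp)

variable (K)

def goodIdeal (P : (Fin n →₀ ℕ) → Prop) (hP : ∀ d e, P e → P (d + e)) :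
    Ideal (MvPolynomial (Fin n) K) where
  carrier := {f | ∀ e ∈ f.support, P e}
  add_mem' := by
    classical
    intro f g hf hg e he
    rcases Finset.mem_union.mp (MvPolynomial.support_add he) with h | h
    exacts [hf _ h, hg _ h]
  zero_mem' := by simp
  smul_mem' c f hf := by
    classical
    intro e he
    rcases Finset.mem_add.mp (MvPolynomial.support_mul c f he) with ⟨d, _, e', he', rfl⟩
    exact hP d e' (hf e' he')

variable {K}

lemma mem_goodIdeal {P : (Fin n →₀ ℕ) → Prop} {hP : ∀ d e, P e → P (d + e)}
    {f : MvPolynomial (Fin n) K} :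
    f ∈ goodIdeal K P hP ↔ ∀ e ∈ f.support, P e := Iff.rfl

lemma goodSet_le_ideal {P : (Fin n →₀ ℕ) → Prop} {J : Ideal (MvPolynomial (Fin n) K)}
    (h : ∀ e, P e → monomial e (1 : K) ∈ J) :
    goodSet K P ≤ Submodule.restrictScalars K J := by
  intro f hf
  rw [MvPolynomial.as_sum f]
  refine Submodule.sum_mem _ fun e he => ?_
  have : monomial e (coeff e f) = (coeff e f) • monomial e (1 : K) := by
    simp [MvPolynomial.smul_monomial]
  rw [this]
  exact Submodule.smul_mem _ _ (h e (hf e he))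

/-! predicates -/

def meets (A : Finset (Fin n)) (e : Fin n →₀ ℕ) : Prop := ∃ i ∈ A, e i ≠ 0

lemma meets_add (A : Finset (Fin n)) : ∀ d e, meets A e → meets A (d + e) := by
  rintro d e ⟨i, hi, hne⟩
  exact ⟨i, hi, by simp [hne]⟩

lemma monomial_mem_varIdeal {A : Finset (Fin n)} {e : Fin n →₀ ℕ} (h : meets A e) :
    monomial e (1 : K) ∈ varIdeal K A := by
  obtain ⟨i, hi, hne⟩ := h
  have hle : Finsupp.single i 1 ≤ e := Finsupp.single_le_iff.mpr (Nat.one_le_iff_ne_zero.mpr hne)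
  have : monomial e (1 : K) = monomial (e - Finsupp.single i 1) (1 : K) * X i := by
    rw [MvPolynomial.X, MvPolynomial.monomial_mul, tsub_add_cancel_of_le hle, one_mul]
  rw [this]
  exact Ideal.mul_mem_left _ _ (Ideal.subset_span ⟨i, hi, rfl⟩)

/-- Lemma A -/
lemma varIdeal_eq_goodSet (A : Finset (Fin n)) :
    Submodule.restrictScalars K (varIdeal K A) = goodSet K (meets A) := by
  apply le_antisymm
  · have : varIdeal K A ≤ goodIdeal K (meets A) (meets_add A) := by
      rw [varIdeal, Ideal.span_le]
      rintro _ ⟨i, hi, rfl⟩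
      intro e he
      rw [MvPolynomial.support_X, Finset.mem_singleton] at he
      subst he
      exact ⟨i, hi, by simp⟩
    exact fun f hf => this hf
  · exact goodSet_le_ideal fun e h => monomial_mem_varIdeal h

/-- Lemma B -/
lemma supported_eq_goodSet (Z : Set (Fin n)) :
    Subalgebra.toSubmodule (MvPolynomial.supported K Z) =
      goodSet K (fun e => ∀ i, e i ≠ 0 → i ∈ Z) := by
  ext f
  rw [Subalgebra.mem_toSubmodule, MvPolynomial.mem_supported, mem_goodSet]
  constructor
  · intro h e he i hi
    exact h (Finset.mem_coe.mpr ((MvPolynomial.mem_vars i).mpr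
      ⟨e, he, Finsupp.mem_support_iff.mpr hi⟩))
  · intro h i hi
    obtain ⟨e, he, hie⟩ := (MvPolynomial.mem_vars i).mp (Finset.mem_coe.mp hi)
    exact h e he i (Finsupp.mem_support_iff.mp hie)

/-- Lemma C -/
lemma span_varIdeal_inter_supported (A B : Finset (Fin n)) :
    Submodule.restrictScalars K
      (Ideal.span ((varIdeal K A : Set (MvPolynomial (Fin n) K)) ∩
        (MvPolynomial.supported K (↑B : Set (Fin n)) : Set (MvPolynomial (Fin n) K)))) =
      goodSet K (meets (A ∩ B)) := by
  classical
  apply le_antisymm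
  · have : Ideal.span ((varIdeal K A : Set (MvPolynomial (Fin n) K)) ∩
        (MvPolynomial.supported K (↑B : Set (Fin n)) : Set (MvPolynomial (Fin n) K))) ≤
        goodIdeal K (meets (A ∩ B)) (meets_add _) := by
      rw [Ideal.span_le]
      rintro h ⟨hA, hB⟩
      intro e he
      have hA' : meets A e := ((varIdeal_eq_goodSet (K := K) A).le hA) e he
      obtain ⟨i, hi, hne⟩ := hA'
      have hBZ : i ∈ (↑B : Set (Fin n)) := by
        have := (supported_eq_goodSet (K := K) (↑B : Set (Fin n))).le
          ((Subalgebra.mem_toSubmodule _).mpr hB)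
        exact this e he i hne
      exact ⟨i, Finset.mem_inter.mpr ⟨hi, Finset.mem_coe.mp hBZ⟩, hne⟩
    exact fun f hf => this hf
  · refine goodSet_le_ideal fun e h => ?_
    obtain ⟨i, hi, hne⟩ := h
    rw [Finset.mem_inter] at hi
    have hle : Finsupp.single i (e i) ≤ e := Finsupp.single_le_iff.mpr le_rfl
    have heq : monomial e (1 : K) =
        monomial (e - Finsupp.single i (e i)) (1 : K) * (X i ^ (e i)) := by
      rw [MvPolynomial.X_pow_eq_monomial, MvPolynomial.monomial_mul,
        tsub_add_cancel_of_le hle, one_mul]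
    rw [heq]
    refine Ideal.mul_mem_left _ _ (Ideal.subset_span (Set.mem_inter ?_ ?_))
    · show X i ^ (e i) ∈ varIdeal K A
      have hx : (X i : MvPolynomial (Fin n) K) ∈ varIdeal K A :=
        Ideal.subset_span ⟨i, hi.1, rfl⟩
      exact Ideal.pow_mem_of_mem _ hx _ (Nat.pos_of_ne_zero hne)
    · show X i ^ (e i) ∈ MvPolynomial.supported K (↑B : Set (Fin n))
      exact pow_mem ((MvPolynomial.X_mem_supported (R := K)).mpr (Finset.mem_coe.mpr hi.2)) _

/-- Lemma D -/
lemma span_triple_inter_supported (A1 A2 A3 : Finset (Fin n)) :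
    Submodule.restrictScalars K
      (Ideal.span ((↑(varIdeal K A1 ⊓ varIdeal K A2 ⊓ varIdeal K A3) :
          Set (MvPolynomial (Fin n) K)) ∩
        (MvPolynomial.supported K (↑A1 : Set (Fin n)) : Set (MvPolynomial (Fin n) K)))) =
      goodSet K (fun e => meets (A1 ∩ A2) e ∧ meets (A1 ∩ A3) e) := by
  classical
  apply le_antisymm
  · have : Ideal.span ((↑(varIdeal K A1 ⊓ varIdeal K A2 ⊓ varIdeal K A3) :
          Set (MvPolynomial (Fin n) K)) ∩
        (MvPolynomial.supported K (↑A1 : Set (Fin n)) : Set (MvPolynomial (Fin n) K))) ≤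
        goodIdeal K (fun e => meets (A1 ∩ A2) e ∧ meets (A1 ∩ A3) e)
          (fun d e h => ⟨meets_add _ d e h.1, meets_add _ d e h.2⟩) := by
      rw [Ideal.span_le]
      rintro h ⟨hI, hB⟩
      intro e he
      obtain ⟨⟨h1, h2⟩, h3⟩ := hI
      have hsub : ∀ i : Fin n, e i ≠ 0 → i ∈ A1 := fun i hi => Finset.mem_coe.mp
        (((supported_eq_goodSet (K := K) (↑A1 : Set (Fin n))).le
          ((Subalgebra.mem_toSubmodule _).mpr hB)) e he i hi)
      obtain ⟨i2, hi2, hne2⟩ := ((varIdeal_eq_goodSet (K := K) A2).le h2) e he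
      obtain ⟨i3, hi3, hne3⟩ := ((varIdeal_eq_goodSet (K := K) A3).le h3) e he
      exact ⟨⟨i2, Finset.mem_inter.mpr ⟨hsub i2 hne2, hi2⟩, hne2⟩,
        ⟨i3, Finset.mem_inter.mpr ⟨hsub i3 hne3, hi3⟩, hne3⟩⟩
    exact fun f hf => this hf
  · refine goodSet_le_ideal fun e h => ?_
    obtain ⟨⟨i2, hi2, hne2⟩, ⟨i3, hi3, hne3⟩⟩ := h
    rw [Finset.mem_inter] at hi2 hi3
    set e' : Fin n →₀ ℕ := Finsupp.filter (· ∈ A1) e with he'def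
    have he'app : ∀ i, e' i = if i ∈ A1 then e i else 0 := fun i => Finsupp.filter_apply _ e i
    have hle : e' ≤ e := by
      rw [Finsupp.le_def]
      intro i
      rw [he'app]
      split <;> simp
    have heq : monomial e (1 : K) = monomial (e - e') (1 : K) * monomial e' 1 := by
      rw [MvPolynomial.monomial_mul, tsub_add_cancel_of_le hle, one_mul]
    rw [heq]
    refine Ideal.mul_mem_left _ _ (Ideal.subset_span (Set.mem_inter ?_ ?_))
    · show monomial e' (1 : K) ∈ varIdeal K A1 ⊓ varIdeal K A2 ⊓ varIdeal K A3
      refine ⟨⟨?_, ?_⟩, ?_⟩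
      · exact monomial_mem_varIdeal ⟨i2, hi2.1, by rw [he'app, if_pos hi2.1]; exact hne2⟩
      · exact monomial_mem_varIdeal ⟨i2, hi2.2, by rw [he'app, if_pos hi2.1]; exact hne2⟩
      · exact monomial_mem_varIdeal ⟨i3, hi3.2, by rw [he'app, if_pos hi3.1]; exact hne3⟩
    · show monomial e' (1 : K) ∈ MvPolynomial.supported K (↑A1 : Set (Fin n))
      rw [← Subalgebra.mem_toSubmodule, supported_eq_goodSet]
      refine monomial_mem_goodSet _ fun i hi => ?_
      rw [he'app] at hi
      by_contra hcon
      rw [if_neg (fun hmem => hcon (Finset.mem_coe.mpr hmem))] at hi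
      exact hi rfl

lemma four_decomp (P1 P2 P3 P4 Q : (Fin n →₀ ℕ) → Prop)
    (h12 : ∀ e, P1 e → P2 e → False) (h13 : ∀ e, P1 e → P3 e → False)
    (h14 : ∀ e, P1 e → P4 e → False) (h23 : ∀ e, P2 e → P3 e → False)
    (h24 : ∀ e, P2 e → P4 e → False) (h34 : ∀ e, P3 e → P4 e → False)
    (hcov : ∀ e, Q e → P1 e ∨ P2 e ∨ P3 e ∨ P4 e)
    (hb1 : ∀ e, P1 e → Q e) (hb2 : ∀ e, P2 e → Q e)
    (hb3 : ∀ e, P3 e → Q e) (hb4 : ∀ e, P4 e → Q e) :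
    iSupIndep (![goodSet K P1, goodSet K P2, goodSet K P3, goodSet K P4] :
        Fin 4 → Submodule K (MvPolynomial (Fin n) K)) ∧
      goodSet K P1 ⊔ goodSet K P2 ⊔ goodSet K P3 ⊔ goodSet K P4 = goodSet K Q := by
  constructor
  · intro i
    fin_cases i
    · refine (goodSet_disjoint (Q := fun e => P2 e ∨ P3 e ∨ P4 e) ?_).mono_right
        (iSup_le fun j => iSup_le fun hj => ?_)
      · rintro e h1 (h | h | h)
        exacts [h12 e h1 h, h13 e h1 h, h14 e h1 h]
      · fin_cases j
        · simp at hj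
        · exact goodSet_mono fun e h => Or.inl h
        · exact goodSet_mono fun e h => Or.inr (Or.inl h)
        · exact goodSet_mono fun e h => Or.inr (Or.inr h)
    · refine (goodSet_disjoint (Q := fun e => P1 e ∨ P3 e ∨ P4 e) ?_).mono_right
        (iSup_le fun j => iSup_le fun hj => ?_)
      · rintro e h1 (h | h | h)
        exacts [h12 e h h1, h23 e h1 h, h24 e h1 h]
      · fin_cases j
        · exact goodSet_mono fun e h => Or.inl h
        · simp at hj
        · exact goodSet_mono fun e h => Or.inr (Or.inl h)
        · exact goodSet_mono fun e h => Or.inr (Or.inr h)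
    · refine (goodSet_disjoint (Q := fun e => P1 e ∨ P2 e ∨ P4 e) ?_).mono_right
        (iSup_le fun j => iSup_le fun hj => ?_)
      · rintro e h1 (h | h | h)
        exacts [h13 e h h1, h23 e h h1, h34 e h1 h]
      · fin_cases j
        · exact goodSet_mono fun e h => Or.inl h
        · exact goodSet_mono fun e h => Or.inr (Or.inl h)
        · simp at hj
        · exact goodSet_mono fun e h => Or.inr (Or.inr h)
    · refine (goodSet_disjoint (Q := fun e => P1 e ∨ P2 e ∨ P3 e) ?_).mono_right
        (iSup_le fun j => iSup_le fun hj => ?_)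
      · rintro e h1 (h | h | h)
        exacts [h14 e h h1, h24 e h h1, h34 e h h1]
      · fin_cases j
        · exact goodSet_mono fun e h => Or.inl h
        · exact goodSet_mono fun e h => Or.inr (Or.inl h)
        · exact goodSet_mono fun e h => Or.inr (Or.inr h)
        · simp at hj
  · apply le_antisymm
    · exact sup_le (sup_le (sup_le (goodSet_mono hb1) (goodSet_mono hb2))
        (goodSet_mono hb3)) (goodSet_mono hb4)
    · calc goodSet K Q ≤ goodSet K (fun e => P1 e ∨ (P2 e ∨ (P3 e ∨ P4 e))) :=
            goodSet_mono fun e hq => by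
              rcases hcov e hq with h | h | h | h <;> tauto
        _ ≤ goodSet K P1 ⊔ goodSet K (fun e => P2 e ∨ (P3 e ∨ P4 e)) := goodSet_le_sup _ _
        _ ≤ goodSet K P1 ⊔ (goodSet K P2 ⊔ goodSet K (fun e => P3 e ∨ P4 e)) :=
            sup_le_sup_left (goodSet_le_sup _ _) _
        _ ≤ goodSet K P1 ⊔ (goodSet K P2 ⊔ (goodSet K P3 ⊔ goodSet K P4)) :=
            sup_le_sup_left (sup_le_sup_left (goodSet_le_sup _ _) _) _
        _ = goodSet K P1 ⊔ goodSet K P2 ⊔ goodSet K P3 ⊔ goodSet K P4 := by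
            rw [sup_assoc, sup_assoc]

end Good


/-- the special direct sum decomposition `I = I₁ ⊕ I₂ ⊕ I₃ ⊕ I₄` of
`I = P₁ ∩ P₂ ∩ P₃` into `K`-linear subspaces, where `P₁ = (x₁,…,x_r)`,
`I₁ = (I ∩ K[x₁,…,x_r])S`,
`I₂ = (P₂ ∩ S')S'[x_{r+1},…,xₙ] ∩ (P₃ ∩ S'[x_{r+1},…,xₙ])`,
`I₃ = (P₃ ∩ S'')S''[x_{r+1},…,xₙ] ∩ (P₂ ∩ S''[x_{r+1},…,xₙ])`,
`I₄ = I ∩ S̃`, with `S' = K[{xᵢ : i ≤ r, xᵢ ∉ P₃}]`, `S'' = K[{xᵢ : i ≤ r, xᵢ ∉ P₂}]`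
and `S̃ = K[{xᵢ : i ≤ r, xᵢ ∉ P₂+P₃}, x_{r+1},…,xₙ]`. -/
theorem special_decomposition_three_primes {K : Type*} [Field K] (n r : ℕ)
    (A2 A3 : Finset (Fin n)) :
    letI S := MvPolynomial (Fin n) K
    letI A1 : Finset (Fin n) := Finset.univ.filter fun i => (i : ℕ) < r
    letI P1 : Ideal S := varIdeal K A1
    letI P2 : Ideal S := varIdeal K A2
    letI P3 : Ideal S := varIdeal K A3
    letI I : Ideal S := P1 ⊓ P2 ⊓ P3
    letI I1 : Submodule K S :=
      Submodule.restrictScalars K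
        (Ideal.span ((I : Set S) ∩ (MvPolynomial.supported K (↑A1 : Set (Fin n)) : Set S)))
    letI I2 : Submodule K S :=
      Submodule.restrictScalars K
          (Ideal.span ((P2 : Set S) ∩
            (MvPolynomial.supported K (↑(A1 \ A3) : Set (Fin n)) : Set S))) ⊓
        Submodule.restrictScalars K P3 ⊓
        Subalgebra.toSubmodule
          (MvPolynomial.supported K ((↑(A1 \ A3) : Set (Fin n)) ∪ {i | r ≤ (i : ℕ)}))
    letI I3 : Submodule K S :=
      Submodule.restrictScalars K
          (Ideal.span ((P3 : Set S) ∩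
            (MvPolynomial.supported K (↑(A1 \ A2) : Set (Fin n)) : Set S))) ⊓
        Submodule.restrictScalars K P2 ⊓
        Subalgebra.toSubmodule
          (MvPolynomial.supported K ((↑(A1 \ A2) : Set (Fin n)) ∪ {i | r ≤ (i : ℕ)}))
    letI I4 : Submodule K S :=
      Submodule.restrictScalars K I ⊓
        Subalgebra.toSubmodule
          (MvPolynomial.supported K ((↑(A1 \ (A2 ∪ A3)) : Set (Fin n)) ∪ {i | r ≤ (i : ℕ)}))
    P1 ≠ ⊥ → P2 ≠ ⊥ → P3 ≠ ⊥ →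
    ¬P1 ≤ P2 → ¬P2 ≤ P1 → ¬P1 ≤ P3 → ¬P3 ≤ P1 → ¬P2 ≤ P3 → ¬P3 ≤ P2 →
    P1 ⊔ P2 ⊔ P3 = maxIdeal n K →
    iSupIndep (![I1, I2, I3, I4] : Fin 4 → Submodule K S) ∧
      I1 ⊔ I2 ⊔ I3 ⊔ I4 = Submodule.restrictScalars K I := by
  
  classical
  intro _ _ _ _ _ _ _ _ _ _
  set A1 : Finset (Fin n) := Finset.univ.filter (fun i => (i : ℕ) < r) with hA1def
  have hA1 : ∀ i : Fin n, i ∈ A1 ↔ (i : ℕ) < r := fun i => by simp [hA1def]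
  have hZ : ∀ (B : Finset (Fin n)) (i : Fin n),
      i ∈ ((↑(A1 \ B) : Set (Fin n)) ∪ {i | r ≤ (i : ℕ)}) ↔
        (((i : ℕ) < r ∧ i ∉ B) ∨ r ≤ (i : ℕ)) := by
    intro B i; simp [hA1def]
  have hRS : Submodule.restrictScalars K (varIdeal K A1 ⊓ varIdeal K A2 ⊓ varIdeal K A3) =
      Submodule.restrictScalars K (varIdeal K A1) ⊓
        Submodule.restrictScalars K (varIdeal K A2) ⊓
        Submodule.restrictScalars K (varIdeal K A3) := rfl
  rw [span_triple_inter_supported A1 A2 A3,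
      span_varIdeal_inter_supported A2 (A1 \ A3),
      span_varIdeal_inter_supported A3 (A1 \ A2),
      hRS, varIdeal_eq_goodSet A1, varIdeal_eq_goodSet A2, varIdeal_eq_goodSet A3]
  simp only [supported_eq_goodSet, goodSet_inf]
  refine four_decomp _ _ _ _ _ ?_ ?_ ?_ ?_ ?_ ?_ ?_ ?_ ?_ ?_ ?_
  · -- h12
    rintro e ⟨-, ⟨i, hi, hne⟩⟩ ⟨-, h2⟩
    rw [Finset.mem_inter, hA1] at hi
    rcases (hZ A3 i).mp (h2 i hne) with ⟨-, h⟩ | h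
    · exact h hi.2
    · omega
  · -- h13
    rintro e ⟨⟨i, hi, hne⟩, -⟩ ⟨-, h2⟩
    rw [Finset.mem_inter, hA1] at hi
    rcases (hZ A2 i).mp (h2 i hne) with ⟨-, h⟩ | h
    · exact h hi.2
    · omega
  · -- h14
    rintro e ⟨⟨i, hi, hne⟩, -⟩ ⟨-, h2⟩
    rw [Finset.mem_inter, hA1] at hi
    rcases (hZ (A2 ∪ A3) i).mp (h2 i hne) with ⟨-, h⟩ | h
    · exact h (Finset.mem_union_left _ hi.2)
    · omega
  · -- h23
    rintro e ⟨⟨⟨i, hi, hne⟩, -⟩, -⟩ ⟨-, h2⟩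
    rw [Finset.mem_inter, Finset.mem_sdiff, hA1] at hi
    rcases (hZ A2 i).mp (h2 i hne) with ⟨-, h⟩ | h
    · exact h hi.1
    · omega
  · -- h24
    rintro e ⟨⟨⟨i, hi, hne⟩, -⟩, -⟩ ⟨-, h2⟩
    rw [Finset.mem_inter, Finset.mem_sdiff, hA1] at hi
    rcases (hZ (A2 ∪ A3) i).mp (h2 i hne) with ⟨-, h⟩ | h
    · exact h (Finset.mem_union_left _ hi.1)
    · omega
  · -- h34
    rintro e ⟨⟨⟨i, hi, hne⟩, -⟩, -⟩ ⟨-, h2⟩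
    rw [Finset.mem_inter, Finset.mem_sdiff, hA1] at hi
    rcases (hZ (A2 ∪ A3) i).mp (h2 i hne) with ⟨-, h⟩ | h
    · exact h (Finset.mem_union_right _ hi.1)
    · omega
  · -- coverage
    intro e hq
    by_cases hb2 : meets (A1 ∩ A2) e
    · by_cases hb3 : meets (A1 ∩ A3) e
      · exact Or.inl ⟨hb2, hb3⟩
      · refine Or.inr (Or.inl ⟨⟨?_, hq.2⟩, ?_⟩)
        · obtain ⟨i, hi, hne⟩ := hb2
          rw [Finset.mem_inter] at hi
          have hiA3 : i ∉ A3 := fun h => hb3 ⟨i, Finset.mem_inter.mpr ⟨hi.1, h⟩, hne⟩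
          exact ⟨i, by rw [Finset.mem_inter, Finset.mem_sdiff]; exact ⟨hi.2, hi.1, hiA3⟩, hne⟩
        · intro i hne
          rw [hZ A3]
          by_cases hr : (i : ℕ) < r
          · exact Or.inl ⟨hr, fun h =>
              hb3 ⟨i, Finset.mem_inter.mpr ⟨(hA1 i).mpr hr, h⟩, hne⟩⟩
          · exact Or.inr (le_of_not_gt hr)
    · by_cases hb3 : meets (A1 ∩ A3) e
      · refine Or.inr (Or.inr (Or.inl ⟨⟨?_, hq.1.2⟩, ?_⟩))
        · obtain ⟨i, hi, hne⟩ := hb3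
          rw [Finset.mem_inter] at hi
          have hiA2 : i ∉ A2 := fun h => hb2 ⟨i, Finset.mem_inter.mpr ⟨hi.1, h⟩, hne⟩
          exact ⟨i, by rw [Finset.mem_inter, Finset.mem_sdiff]; exact ⟨hi.2, hi.1, hiA2⟩, hne⟩
        · intro i hne
          rw [hZ A2]
          by_cases hr : (i : ℕ) < r
          · exact Or.inl ⟨hr, fun h =>
              hb2 ⟨i, Finset.mem_inter.mpr ⟨(hA1 i).mpr hr, h⟩, hne⟩⟩
          · exact Or.inr (le_of_not_gt hr)
      · refine Or.inr (Or.inr (Or.inr ⟨hq, ?_⟩))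
        intro i hne
        rw [hZ (A2 ∪ A3)]
        by_cases hr : (i : ℕ) < r
        · refine Or.inl ⟨hr, fun h => ?_⟩
          rcases Finset.mem_union.mp h with h' | h'
          · exact hb2 ⟨i, Finset.mem_inter.mpr ⟨(hA1 i).mpr hr, h'⟩, hne⟩
          · exact hb3 ⟨i, Finset.mem_inter.mpr ⟨(hA1 i).mpr hr, h'⟩, hne⟩
        · exact Or.inr (le_of_not_gt hr)
  · -- hb1
    rintro e ⟨⟨i2, hi2, hne2⟩, ⟨i3, hi3, hne3⟩⟩
    rw [Finset.mem_inter] at hi2 hi3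
    exact ⟨⟨⟨i2, hi2.1, hne2⟩, ⟨i2, hi2.2, hne2⟩⟩, ⟨i3, hi3.2, hne3⟩⟩
  · -- hb2
    rintro e ⟨⟨⟨i, hi, hne⟩, h3⟩, -⟩
    rw [Finset.mem_inter, Finset.mem_sdiff] at hi
    exact ⟨⟨⟨i, hi.2.1, hne⟩, ⟨i, hi.1, hne⟩⟩, h3⟩
  · -- hb3
    rintro e ⟨⟨⟨i, hi, hne⟩, h2⟩, -⟩
    rw [Finset.mem_inter, Finset.mem_sdiff] at hi
    exact ⟨⟨⟨i, hi.2.1, hne⟩, h2⟩, ⟨i, hi.1, hne⟩⟩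
  · -- hb4
    exact fun e h => h.1
end

section
/- Let S = K[x_1,x_2,x_3,x_4], P_1 = (x_1,x_2), P_2 = (x_2,x_3,x_4), P_3 = (x_1,x_3), and I = P_1 ∩ P_2 ∩ P_3. Then I = (x_1x_2,x_1x_3,x_1x_4,x_2x_3) and I = x_1x_2 K[x_1,x_2,x_3,x_4] ⊕ x_2x_3 K[x_2,x_3,x_4] ⊕ ((x_1) ∩ (x_3,x_4)) K[x_1,x_3,x_4] as a direct sum of K-vector spaces. -/
open MvPolynomial

namespace Aux3P
variable {K : Type*} [Field K]

lemma mem_span_mono {A : Set (Fin 4 →₀ ℕ)} {p : MvPolynomial (Fin 4) K} :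
    p ∈ Submodule.span K ((fun e => monomial e (1:K)) '' A) ↔ ∀ e ∈ p.support, e ∈ A := by
  rw [← restrictSupport_eq_span, mem_restrictSupport_iff]
  rfl

lemma pair_le {i j : Fin 4} (hij : i ≠ j) (e : Fin 4 →₀ ℕ) :
    Finsupp.single i 1 + Finsupp.single j 1 ≤ e ↔ e i ≠ 0 ∧ e j ≠ 0 := by
  rw [Finsupp.le_def]
  constructor
  · intro h
    have hi := h i; have hj := h j
    simp [Finsupp.single_apply, hij, hij.symm] at hi hj
    omega
  · rintro ⟨hi, hj⟩ k
    simp only [Finsupp.add_apply, Finsupp.single_apply]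
    split_ifs with h1 h2 <;> subst_vars <;> simp_all <;> omega

lemma varIdeal_mem {A : Finset (Fin 4)} {p : MvPolynomial (Fin 4) K} :
    p ∈ varIdeal K A ↔ ∀ e ∈ p.support, ∃ i ∈ A, e i ≠ 0 := by
  have himg : ((fun i => (X i : MvPolynomial (Fin 4) K)) '' ↑A)
      = (fun d => monomial d (1:K)) '' ((fun i => Finsupp.single i 1) '' ↑A) := by
    rw [Set.image_image]; rfl
  rw [varIdeal, himg, mem_ideal_span_monomial_image]
  apply forall₂_congr
  intro e _
  constructor
  · rintro ⟨si, ⟨i, hi, rfl⟩, hle⟩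
    exact ⟨i, hi, by have := Finsupp.single_le_iff.mp hle; omega⟩
  · rintro ⟨i, hi, hne⟩
    exact ⟨Finsupp.single i 1, ⟨i, hi, rfl⟩, Finsupp.single_le_iff.mpr (by omega)⟩

lemma disj {A B : Set (Fin 4 →₀ ℕ)} (h : ∀ e, e ∈ A → e ∈ B → False) :
    Disjoint (Submodule.span K ((fun e => monomial e (1:K)) '' A))
      (Submodule.span K ((fun e => monomial e (1:K)) '' B)) := by
  rw [Submodule.disjoint_def]
  intro p hA hB
  rw [mem_span_mono] at hA hB
  rw [← support_eq_empty, Finset.eq_empty_iff_forall_notMem]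
  intro e he
  exact h e (hA e he) (hB e he)

end Aux3P

namespace Aux3P

def A1 : Set (Fin 4 →₀ ℕ) := {e | e 0 ≠ 0 ∧ e 1 ≠ 0}
def A2 : Set (Fin 4 →₀ ℕ) := {e | e 0 = 0 ∧ e 1 ≠ 0 ∧ e 2 ≠ 0}
def A3 : Set (Fin 4 →₀ ℕ) := {e | e 1 = 0 ∧ e 0 ≠ 0 ∧ (e 2 ≠ 0 ∨ e 3 ≠ 0)}

variable {K : Type*} [Field K]

lemma set1 : {f : MvPolynomial (Fin 4) K | ∃ e : Fin 4 →₀ ℕ,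
      (∀ i, e i ≠ 0 → i ∈ (Finset.univ : Finset (Fin 4))) ∧
      f = monomial ((Finsupp.single 0 1 + Finsupp.single 1 1) + e) 1}
    = (fun e => monomial e (1:K)) '' A1 := by
  ext f
  simp only [Set.mem_setOf_eq, Set.mem_image, A1]
  constructor
  · rintro ⟨e, -, rfl⟩
    refine ⟨_, ⟨?_, ?_⟩, rfl⟩ <;> simp [Finsupp.single_apply]
  · rintro ⟨e', ⟨h0, h1⟩, rfl⟩
    have hle : (Finsupp.single 0 1 + Finsupp.single 1 1 : Fin 4 →₀ ℕ) ≤ e' :=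
      (pair_le (by decide) e').mpr ⟨h0, h1⟩
    exact ⟨e' - (Finsupp.single 0 1 + Finsupp.single 1 1),
      fun i _ => Finset.mem_univ i, by rw [add_tsub_cancel_of_le hle]⟩

lemma set2 : {f : MvPolynomial (Fin 4) K | ∃ e : Fin 4 →₀ ℕ,
      (∀ i, e i ≠ 0 → i ∈ ({1, 2, 3} : Finset (Fin 4))) ∧
      f = monomial ((Finsupp.single 1 1 + Finsupp.single 2 1) + e) 1}
    = (fun e => monomial e (1:K)) '' A2 := by
  ext f
  simp only [Set.mem_setOf_eq, Set.mem_image, A2]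
  constructor
  · rintro ⟨e, hZ, rfl⟩
    have h0 : e 0 = 0 := by
      by_contra h
      have := hZ 0 h
      simp at this
    refine ⟨_, ⟨?_, ?_, ?_⟩, rfl⟩ <;> simp [Finsupp.single_apply, h0]
  · rintro ⟨e', ⟨h0, h1, h2⟩, rfl⟩
    have hle : (Finsupp.single 1 1 + Finsupp.single 2 1 : Fin 4 →₀ ℕ) ≤ e' :=
      (pair_le (by decide) e').mpr ⟨h1, h2⟩
    refine ⟨e' - (Finsupp.single 1 1 + Finsupp.single 2 1), ?_,
      by rw [add_tsub_cancel_of_le hle]⟩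
    intro i hi
    fin_cases i
    · exfalso
      apply hi
      simp [Finsupp.tsub_apply, Finsupp.single_apply, h0]
    · simp
    · simp
    · simp

lemma set3 : {f : MvPolynomial (Fin 4) K | ∃ e : Fin 4 →₀ ℕ,
      (∀ i, e i ≠ 0 → i ∈ ({0, 2, 3} : Finset (Fin 4))) ∧ e 0 ≠ 0 ∧
      (e 2 ≠ 0 ∨ e 3 ≠ 0) ∧ f = monomial e (1:K)}
    = (fun e => monomial e (1:K)) '' A3 := by
  ext f
  simp only [Set.mem_setOf_eq, Set.mem_image, A3]
  constructor
  · rintro ⟨e, hZ, h0, h23, rfl⟩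
    refine ⟨e, ⟨?_, h0, h23⟩, rfl⟩
    by_contra h
    have := hZ 1 h
    simp at this
  · rintro ⟨e, ⟨h1, h0, h23⟩, rfl⟩
    refine ⟨e, ?_, h0, h23, rfl⟩
    intro i hi
    fin_cases i <;> simp_all

end Aux3P

namespace Aux3P
variable {K : Type*} [Field K]

lemma genset_iff (e : Fin 4 →₀ ℕ) :
    (∃ si ∈ ({Finsupp.single 0 1 + Finsupp.single 1 1, Finsupp.single 0 1 + Finsupp.single 2 1,
      Finsupp.single 0 1 + Finsupp.single 3 1, Finsupp.single 1 1 + Finsupp.single 2 1} :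
      Set (Fin 4 →₀ ℕ)), si ≤ e) ↔
    ((e 0 ≠ 0 ∨ e 1 ≠ 0) ∧ (e 1 ≠ 0 ∨ e 2 ≠ 0 ∨ e 3 ≠ 0) ∧ (e 0 ≠ 0 ∨ e 2 ≠ 0)) := by
  simp only [Set.mem_insert_iff, Set.mem_singleton_iff, exists_eq_or_imp, exists_eq_left,
    pair_le (show (0:Fin 4) ≠ 1 by decide) e, pair_le (show (0:Fin 4) ≠ 2 by decide) e,
    pair_le (show (0:Fin 4) ≠ 3 by decide) e, pair_le (show (1:Fin 4) ≠ 2 by decide) e]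
  tauto

lemma I_mem {p : MvPolynomial (Fin 4) K} :
    p ∈ varIdeal K {0, 1} ⊓ varIdeal K {1, 2, 3} ⊓ varIdeal K {0, 2} ↔
      ∀ e ∈ p.support,
        ((e 0 ≠ 0 ∨ e 1 ≠ 0) ∧ (e 1 ≠ 0 ∨ e 2 ≠ 0 ∨ e 3 ≠ 0) ∧ (e 0 ≠ 0 ∨ e 2 ≠ 0)) := by
  rw [Submodule.mem_inf, Submodule.mem_inf, varIdeal_mem, varIdeal_mem, varIdeal_mem]
  simp only [Finset.mem_insert, Finset.mem_singleton, exists_eq_or_imp, exists_eq_left]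
  constructor
  · rintro ⟨⟨h1, h2⟩, h3⟩ e he
    exact ⟨h1 e he, h2 e he, h3 e he⟩
  · intro h
    exact ⟨⟨fun e he => (h e he).1, fun e he => (h e he).2.1⟩, fun e he => (h e he).2.2⟩

lemma J1_eq : stanleySpace K (Finsupp.single 0 1 + Finsupp.single 1 1) Finset.univ
    = Submodule.span K ((fun e => monomial e (1:K)) '' A1) := by
  rw [stanleySpace, set1]

lemma J2_eq : stanleySpace K (Finsupp.single 1 1 + Finsupp.single 2 1) {1, 2, 3}
    = Submodule.span K ((fun e => monomial e (1:K)) '' A2) := by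
  rw [stanleySpace, set2]

end Aux3P

open Aux3P

/-- for `P₁ = (x₁,x₂)`, `P₂ = (x₂,x₃,x₄)`, `P₃ = (x₁,x₃)` in
`K[x₁,x₂,x₃,x₄]`, `I = P₁ ∩ P₂ ∩ P₃ = (x₁x₂, x₁x₃, x₁x₄, x₂x₃)`, and `I`
decomposes as the direct sum of `K`-vector spaces
`x₁x₂ K[x₁,x₂,x₃,x₄] ⊕ x₂x₃ K[x₂,x₃,x₄] ⊕ ((x₁) ∩ (x₃,x₄)) K[x₁,x₃,x₄]`. -/
theorem example_three_primes_decomposition {K : Type*} [Field K] :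
    letI s : Fin 4 → (Fin 4 →₀ ℕ) := fun i => Finsupp.single i 1
    letI I : Ideal (MvPolynomial (Fin 4) K) :=
      varIdeal K {0, 1} ⊓ varIdeal K {1, 2, 3} ⊓ varIdeal K {0, 2}
    letI J1 : Submodule K (MvPolynomial (Fin 4) K) :=
      stanleySpace K (s 0 + s 1) Finset.univ
    letI J2 : Submodule K (MvPolynomial (Fin 4) K) :=
      stanleySpace K (s 1 + s 2) {1, 2, 3}
    letI J3 : Submodule K (MvPolynomial (Fin 4) K) :=
      Submodule.span K {f | ∃ e : Fin 4 →₀ ℕ,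
        (∀ i, e i ≠ 0 → i ∈ ({0, 2, 3} : Finset (Fin 4))) ∧ e 0 ≠ 0 ∧
          (e 2 ≠ 0 ∨ e 3 ≠ 0) ∧ f = monomial e (1 : K)}
    I = Ideal.span {monomial (s 0 + s 1) 1, monomial (s 0 + s 2) 1,
        monomial (s 0 + s 3) 1, monomial (s 1 + s 2) 1} ∧
      iSupIndep (![J1, J2, J3] : Fin 3 → Submodule K (MvPolynomial (Fin 4) K)) ∧
      J1 ⊔ J2 ⊔ J3 = Submodule.restrictScalars K I := by
  refine ⟨?_, ?_, ?_⟩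
  · ext p
    have himg : ({monomial (Finsupp.single 0 1 + Finsupp.single 1 1) 1,
        monomial (Finsupp.single 0 1 + Finsupp.single 2 1) 1,
        monomial (Finsupp.single 0 1 + Finsupp.single 3 1) 1,
        monomial (Finsupp.single 1 1 + Finsupp.single 2 1) 1} : Set (MvPolynomial (Fin 4) K))
        = (fun d => monomial d (1:K)) '' {Finsupp.single 0 1 + Finsupp.single 1 1,
          Finsupp.single 0 1 + Finsupp.single 2 1, Finsupp.single 0 1 + Finsupp.single 3 1,
          Finsupp.single 1 1 + Finsupp.single 2 1} := by
      simp [Set.image_insert_eq]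
    rw [I_mem, himg, mem_ideal_span_monomial_image]
    exact (forall₂_congr fun e _ => genset_iff e).symm
  · rw [J1_eq, J2_eq, set3]
    intro i
    fin_cases i
    · refine Disjoint.mono_right ?_ (disj (A := A1) (B := A2 ∪ A3) ?_)
      · apply iSup_le; intro j; apply iSup_le; intro hj
        fin_cases j
        · exact absurd rfl hj
        · exact Submodule.span_mono (Set.image_mono Set.subset_union_left)
        · exact Submodule.span_mono (Set.image_mono Set.subset_union_right)
      · intro e hA hB
        simp only [A1, A2, A3, Set.mem_union, Set.mem_setOf_eq] at hA hB
        tauto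
    · refine Disjoint.mono_right ?_ (disj (A := A2) (B := A1 ∪ A3) ?_)
      · apply iSup_le; intro j; apply iSup_le; intro hj
        fin_cases j
        · exact Submodule.span_mono (Set.image_mono Set.subset_union_left)
        · exact absurd rfl hj
        · exact Submodule.span_mono (Set.image_mono Set.subset_union_right)
      · intro e hA hB
        simp only [A1, A2, A3, Set.mem_union, Set.mem_setOf_eq] at hA hB
        tauto
    · refine Disjoint.mono_right ?_ (disj (A := A3) (B := A1 ∪ A2) ?_)
      · apply iSup_le; intro j; apply iSup_le; intro hj
        fin_cases j
        · exact Submodule.span_mono (Set.image_mono Set.subset_union_left)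
        · exact Submodule.span_mono (Set.image_mono Set.subset_union_right)
        · exact absurd rfl hj
      · intro e hA hB
        simp only [A1, A2, A3, Set.mem_union, Set.mem_setOf_eq] at hA hB
        tauto
  · rw [J1_eq, J2_eq, set3, ← Submodule.span_union, ← Submodule.span_union,
      ← Set.image_union, ← Set.image_union]
    ext p
    rw [mem_span_mono, Submodule.restrictScalars_mem, I_mem]
    apply forall₂_congr
    intro e _
    simp only [A1, A2, A3, Set.mem_union, Set.mem_setOf_eq]
    tauto
end

section
/- Let P_1, P_2, P_3 be monomial primes of S = K[x_1,...,x_n], pairwise incomparable, with P_1 + P_2 + P_3 = (x_1,...,x_n), P_1 = (x_1,...,x_r). Then A = ⌈(3n − ht(P_1+P_2) − ht(P_2+P_3) − ht(P_2))/2⌉ + ⌈(ht(P_1+P_2) − ht(P_1))/2⌉, where A = ⌈a_{32}/2⌉ + ⌈(ht(P_2) − b_2)/2⌉ + n − a_{32} − ht(P_2) with a_{32} = #{i ≤ r : x_i ∈ P_3 \ P_2} and b_2 = #{i ≤ r : x_i ∈ P_2}. Analogous formulas hold for B and C; in particular C = ⌈(n − ht(P_2+P_3))/2⌉ + ⌈(n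 − ht(P_1+P_3))/2⌉ + ⌈(n − ht(P_1+P_2))/2⌉. -/
open MvPolynomial

lemma mem_varIdeal_X {n : ℕ} {K : Type*} [Field K] (A : Finset (Fin n)) (i : Fin n) :
    (X i : MvPolynomial (Fin n) K) ∈ varIdeal K A ↔ i ∈ A := by
  constructor
  · intro h
    by_contra hi
    set φ : MvPolynomial (Fin n) K →ₐ[K] K :=
      aeval (fun j : Fin n => if j ∈ A then (0:K) else 1) with hφ
    have hker : varIdeal K A ≤ RingHom.ker (φ : MvPolynomial (Fin n) K →+* K) := by
      rw [varIdeal, Ideal.span_le]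
      rintro _ ⟨j, hj, rfl⟩
      simp [RingHom.mem_ker, hφ, Finset.mem_coe.mp hj]
    have := hker h
    simp [RingHom.mem_ker, hφ, hi] at this
  · intro hi
    exact Ideal.subset_span ⟨i, hi, rfl⟩

lemma varIdeal_le_iff {n : ℕ} {K : Type*} [Field K] (A B : Finset (Fin n)) :
    varIdeal K A ≤ varIdeal K B ↔ A ⊆ B := by
  constructor
  · intro h i hi
    exact (mem_varIdeal_X B i).1 (h ((mem_varIdeal_X A i).2 hi))
  · intro h
    rw [varIdeal, Ideal.span_le]
    rintro _ ⟨j, hj, rfl⟩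
    exact (mem_varIdeal_X B j).2 (h hj)

lemma varIdeal_sup {n : ℕ} {K : Type*} [Field K] (A B : Finset (Fin n)) :
    varIdeal K A ⊔ varIdeal K B = varIdeal K (A ∪ B) := by
  rw [varIdeal, varIdeal, varIdeal, ← Ideal.span_union, ← Set.image_union, Finset.coe_union]


set_option maxHeartbeats 2000000 in
/-- the quantities `A`, `B`, `C` expressed purely in terms of the
heights of the primes `P_i` and of their pairwise sums (heights being
cardinalities of the generating variable sets, `P₁ = (x₁,…,x_r)`, and
`⌈x/2⌉ = (x+1)/2` in natural-number arithmetic). -/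
theorem ABC_height_formulas {K : Type*} [Field K] (n r : ℕ)
    (A2 A3 : Finset (Fin n)) :
    letI A1 : Finset (Fin n) := Finset.univ.filter fun i => (i : ℕ) < r
    letI P1 : Ideal (MvPolynomial (Fin n) K) := varIdeal K A1
    letI P2 : Ideal (MvPolynomial (Fin n) K) := varIdeal K A2
    letI P3 : Ideal (MvPolynomial (Fin n) K) := varIdeal K A3
    letI b1 : ℕ := (A1 ∩ (A2 ∪ A3)).card
    letI b2 : ℕ := (A1 ∩ A2).card
    letI b3 : ℕ := (A1 ∩ A3).card
    letI a23 : ℕ := (A1 ∩ (A2 \ A3)).card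
    letI a32 : ℕ := (A1 ∩ (A3 \ A2)).card
    letI c : ℕ := ((A2 ∩ A3) \ A1).card
    P1 ≠ ⊥ → P2 ≠ ⊥ → P3 ≠ ⊥ →
    ¬P1 ≤ P2 → ¬P2 ≤ P1 → ¬P1 ≤ P3 → ¬P3 ≤ P1 → ¬P2 ≤ P3 → ¬P3 ≤ P2 →
    P1 ⊔ P2 ⊔ P3 = maxIdeal n K →
    ((a32 + 1) / 2 + (A2.card - b2 + 1) / 2 + n - a32 - A2.card =
        (3 * n - (A1 ∪ A2).card - (A2 ∪ A3).card - A2.card + 1) / 2 +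
          ((A1 ∪ A2).card - A1.card + 1) / 2) ∧
      ((a23 + 1) / 2 + (A3.card - b3 + 1) / 2 + n - a23 - A3.card =
        (3 * n - (A1 ∪ A3).card - (A2 ∪ A3).card - A3.card + 1) / 2 +
          ((A1 ∪ A3).card - A1.card + 1) / 2) ∧
      ((r - b1 + 1) / 2 + (A2.card - b2 - c + 1) / 2 + (A3.card - b3 - c + 1) / 2 =
        (n - (A2 ∪ A3).card + 1) / 2 + (n - (A1 ∪ A3).card + 1) / 2 +
          (n - (A1 ∪ A2).card + 1) / 2) := by

  intro _ _ _ _ h21 _ _ _ _ hsum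
  set A1 : Finset (Fin n) := Finset.univ.filter (fun i : Fin n => (i : ℕ) < r) with hA1def
  -- A1 ≠ univ, so r < n and A1.card = r
  have hA2A1 : ¬ A2 ⊆ A1 := fun h => h21 ((varIdeal_le_iff _ _).2 h)
  obtain ⟨i, hiA2, hiA1⟩ := Finset.not_subset.1 hA2A1
  have hrn : r < n := by
    simp only [A1, Finset.mem_filter, Finset.mem_univ, true_and, not_lt] at hiA1
    exact lt_of_le_of_lt hiA1 i.isLt
  have hr : A1.card = r := by
    have : A1 = Finset.Iio (⟨r, hrn⟩ : Fin n) := by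
      ext j; simp [A1, Finset.mem_Iio, Fin.lt_def]
    rw [this, Fin.card_Iio]
  -- union = univ
  have hUeq : A1 ∪ A2 ∪ A3 = (Finset.univ : Finset (Fin n)) := by
    rw [varIdeal_sup, varIdeal_sup] at hsum
    exact Finset.Subset.antisymm (Finset.subset_univ _)
      ((varIdeal_le_iff _ _).1 hsum.ge)
  have hU : (A1 ∪ A2 ∪ A3).card = n := by rw [hUeq, Finset.card_univ, Fintype.card_fin]
  -- inclusion–exclusion facts
  have e1 := Finset.card_union_add_card_inter A1 A2
  have e2 := Finset.card_union_add_card_inter A1 A3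
  have e3 := Finset.card_union_add_card_inter A2 A3
  have e4 := Finset.card_union_add_card_inter (A1 ∪ A2) A3
  have e5 : (A1 ∪ A2) ∩ A3 = (A1 ∩ A3) ∪ (A2 ∩ A3) := Finset.union_inter_distrib_right ..
  have e6 := Finset.card_union_add_card_inter (A1 ∩ A3) (A2 ∩ A3)
  have e7 : (A1 ∩ A3) ∩ (A2 ∩ A3) = A1 ∩ A2 ∩ A3 := by ext j; simp only [Finset.mem_inter, Finset.mem_union, Finset.mem_sdiff]; tauto
  have e8 := Finset.card_union_add_card_inter (A1 ∩ A2) (A1 ∩ A3)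
  have e9 : (A1 ∩ A2) ∩ (A1 ∩ A3) = A1 ∩ A2 ∩ A3 := by ext j; simp only [Finset.mem_inter, Finset.mem_union, Finset.mem_sdiff]; tauto
  have e10 : A1 ∩ (A2 ∪ A3) = (A1 ∩ A2) ∪ (A1 ∩ A3) := Finset.inter_union_distrib_left ..
  have e11 := Finset.card_union_add_card_inter (A1 ∩ A2) (A2 ∩ A3)
  have e12 : (A1 ∩ A2) ∩ (A2 ∩ A3) = A1 ∩ A2 ∩ A3 := by ext j; simp only [Finset.mem_inter, Finset.mem_union, Finset.mem_sdiff]; tauto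
  -- sdiff descriptions
  have hsub1 : A1 ∩ A2 ∩ A3 ⊆ A1 ∩ A3 := by intro j; simp only [Finset.mem_inter, Finset.mem_union, Finset.mem_sdiff]; tauto
  have hsub2 : A1 ∩ A2 ∩ A3 ⊆ A1 ∩ A2 := by intro j; simp only [Finset.mem_inter, Finset.mem_union, Finset.mem_sdiff]; tauto
  have hsub3 : A1 ∩ A2 ∩ A3 ⊆ A2 ∩ A3 := by intro j; simp only [Finset.mem_inter, Finset.mem_union, Finset.mem_sdiff]; tauto
  have d1 : A1 ∩ (A3 \ A2) = (A1 ∩ A3) \ (A1 ∩ A2 ∩ A3) := by ext j; simp only [Finset.mem_inter, Finset.mem_union, Finset.mem_sdiff]; tauto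
  have d2 : A1 ∩ (A2 \ A3) = (A1 ∩ A2) \ (A1 ∩ A2 ∩ A3) := by ext j; simp only [Finset.mem_inter, Finset.mem_union, Finset.mem_sdiff]; tauto
  have d3 : (A2 ∩ A3) \ A1 = (A2 ∩ A3) \ (A1 ∩ A2 ∩ A3) := by ext j; simp only [Finset.mem_inter, Finset.mem_union, Finset.mem_sdiff]; tauto
  have f1 : (A1 ∩ (A3 \ A2)).card + (A1 ∩ A2 ∩ A3).card = (A1 ∩ A3).card := by
    rw [d1, Finset.card_sdiff_of_subset hsub1]
    exact Nat.sub_add_cancel (Finset.card_le_card hsub1)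
  have f2 : (A1 ∩ (A2 \ A3)).card + (A1 ∩ A2 ∩ A3).card = (A1 ∩ A2).card := by
    rw [d2, Finset.card_sdiff_of_subset hsub2]
    exact Nat.sub_add_cancel (Finset.card_le_card hsub2)
  have f3 : ((A2 ∩ A3) \ A1).card + (A1 ∩ A2 ∩ A3).card = (A2 ∩ A3).card := by
    rw [d3, Finset.card_sdiff_of_subset hsub3]
    exact Nat.sub_add_cancel (Finset.card_le_card hsub3)
  -- inequalities
  have g1 : ((A1 ∩ A2) ∪ (A1 ∩ A3)).card ≤ A1.card :=
    Finset.card_le_card (by intro j; simp only [Finset.mem_inter, Finset.mem_union, Finset.mem_sdiff]; tauto)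
  have g2 : ((A1 ∩ A2) ∪ (A2 ∩ A3)).card ≤ A2.card :=
    Finset.card_le_card (by intro j; simp only [Finset.mem_inter, Finset.mem_union, Finset.mem_sdiff]; tauto)
  have g3 : ((A1 ∩ A3) ∪ (A2 ∩ A3)).card ≤ A3.card :=
    Finset.card_le_card (by intro j; simp only [Finset.mem_inter, Finset.mem_union, Finset.mem_sdiff]; tauto)
  have g4 : (A1 ∪ A2).card ≤ n := by
    simpa using (Finset.card_le_univ (A1 ∪ A2))
  have g5 : (A1 ∪ A3).card ≤ n := by
    simpa using (Finset.card_le_univ (A1 ∪ A3))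
  have g6 : (A2 ∪ A3).card ≤ n := by
    simpa using (Finset.card_le_univ (A2 ∪ A3))
  rw [e5] at e4
  rw [e7] at e6
  rw [e9] at e8
  have e10c : (A1 ∩ (A2 ∪ A3)).card = ((A1 ∩ A2) ∪ (A1 ∩ A3)).card := by rw [e10]
  rw [e12] at e11
  refine ⟨?_, ?_, ?_⟩ <;> omega
end
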